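/- Let ð₀ > 0 and N ∈ ℕ. Then there exists a measurable function g : (0,∞) → [0,∞) with ∫₀^∞ g(r)·r dr < ∞ and ∫₀^∞ g(r)²·r dr < ∞ such that |ψ_ð^j(x)| ≤ g(x) for all x > 0, all j ∈ {0, …, N} and all ð ∈ [ð₀/2, 3ð₀/2]; i.e., the scaled Laguerre functions with parameters in a compact interval are uniformly dominated by a single function that is integrable and square-integrable with respect to r dr. -/
import Mathlib


open MeasureTheory

/-- The j-th Laguerre polynomial `L_j(t) = Σ_{k=0}^{j} ((−1)^k/k!)·C(j, j−k)·t^k`. -/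
noncomputable def laguerreP (j : ℕ) (t : ℝ) : ℝ :=
  ∑ k ∈ Finset.range (j + 1),
    ((-1 : ℝ) ^ k / (Nat.factorial k)) * (Nat.choose j (j - k)) * t ^ k

/-- The scaled Laguerre function `ψ_ð^j(r) = ð·exp(−πðr²/2)·L_j(πðr²)`. -/
noncomputable def psiL (dh : ℝ) (j : ℕ) (r : ℝ) : ℝ :=
  dh * Real.exp (-(Real.pi * dh * r ^ 2) / 2) * laguerreP j (Real.pi * dh * r ^ 2)

lemma aux_int (a : ℝ) {b : ℝ} (hb : 0 < b) (n : ℕ) :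
    IntegrableOn (fun x : ℝ => (1 + a * x ^ 2) ^ n * Real.exp (-b * x ^ 2) * x)
      (Set.Ioi 0) := by
  have hsum : IntegrableOn (fun x : ℝ => ∑ k ∈ Finset.range (n + 1),
      (a ^ k * (n.choose k : ℝ)) * (x ^ ((2 * k + 1 : ℕ) : ℝ) * Real.exp (-b * x ^ 2)))
      (Set.Ioi 0) := by
    apply integrable_finset_sum
    intro k _
    exact ((integrableOn_rpow_mul_exp_neg_mul_sq hb
      ((neg_lt_zero.mpr one_pos).trans_le (Nat.cast_nonneg _))).const_mul _)
  refine hsum.congr_fun (fun x hx => ?_) measurableSet_Ioi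
  have hx0 : (0 : ℝ) < x := hx
  rw [add_comm (1 : ℝ), add_pow, Finset.sum_mul, Finset.sum_mul]
  refine Finset.sum_congr rfl fun k hk => ?_
  rw [Real.rpow_natCast, one_pow, mul_pow, pow_add, pow_mul, pow_one]
  ring

lemma lag_bound {j N : ℕ} (hj : j ≤ N) {t : ℝ} (ht : 0 ≤ t) :
    |laguerreP j t| ≤ ((N : ℝ) + 1) * 2 ^ N * (1 + t) ^ N := by
  have h1 : (1 : ℝ) ≤ 1 + t := by linarith
  calc |laguerreP j t|
      ≤ ∑ k ∈ Finset.range (j + 1),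
          |((-1 : ℝ) ^ k / (Nat.factorial k)) * (Nat.choose j (j - k)) * t ^ k| :=
        Finset.abs_sum_le_sum_abs _ _
    _ ≤ ∑ k ∈ Finset.range (j + 1), (2 : ℝ) ^ N * (1 + t) ^ N := by
        refine Finset.sum_le_sum fun k hk => ?_
        rw [abs_mul, abs_mul, abs_div, abs_pow, abs_neg, abs_one, one_pow]
        have hf : (1 : ℝ) ≤ (Nat.factorial k : ℝ) := by
          exact_mod_cast Nat.one_le_iff_ne_zero.mpr (Nat.factorial_pos k).ne'
        have hdiv : (1 : ℝ) / |(Nat.factorial k : ℝ)| ≤ 1 := by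
          rw [abs_of_pos (by linarith : (0:ℝ) < (Nat.factorial k : ℝ))]
          exact div_le_one_of_le₀ hf (by linarith)
        have hch : (Nat.choose j (j - k) : ℝ) ≤ (2 : ℝ) ^ N := by
          have h2 : Nat.choose j (j - k) ≤ 2 ^ j := by
            calc Nat.choose j (j - k) ≤ ∑ i ∈ Finset.range (j + 1), Nat.choose j i :=
                  Finset.single_le_sum (fun i _ => Nat.zero_le _)
                    (Finset.mem_range.mpr (Nat.lt_succ_of_le (Nat.sub_le j k)))
              _ = 2 ^ j := Nat.sum_range_choose j
          have h3 : (2 : ℕ) ^ j ≤ 2 ^ N := Nat.pow_le_pow_right (by norm_num) hj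
          exact_mod_cast h2.trans h3
        have htk : |t ^ k| ≤ (1 + t) ^ N := by
          rw [abs_pow, abs_of_nonneg ht]
          calc t ^ k ≤ (1 + t) ^ k := pow_le_pow_left₀ ht (by linarith) k
            _ ≤ (1 + t) ^ N := pow_le_pow_right₀ h1 (le_trans (Nat.lt_succ_iff.mp
                  (Finset.mem_range.mp hk)) hj)
        have habs : |(Nat.choose j (j - k) : ℝ)| = (Nat.choose j (j - k) : ℝ) :=
          abs_of_nonneg (Nat.cast_nonneg _)
        rw [habs]
        calc (1:ℝ)/|(Nat.factorial k : ℝ)| * (Nat.choose j (j - k) : ℝ) * |t ^ k|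
            ≤ 1 * (2 : ℝ) ^ N * ((1 + t) ^ N) := by
              apply mul_le_mul (mul_le_mul hdiv hch (Nat.cast_nonneg _)
                (by positivity)) htk (abs_nonneg _) (by positivity)
          _ = (2 : ℝ) ^ N * (1 + t) ^ N := by ring
    _ = ((j : ℝ) + 1) * ((2 : ℝ) ^ N * (1 + t) ^ N) := by
        rw [Finset.sum_const, Finset.card_range]
        push_cast; ring
    _ ≤ ((N : ℝ) + 1) * 2 ^ N * (1 + t) ^ N := by
        have : (j : ℝ) + 1 ≤ (N : ℝ) + 1 := by exact_mod_cast Nat.succ_le_succ hj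
        nlinarith [pow_nonneg (by norm_num : (0:ℝ) ≤ 2) N,
          pow_nonneg (by linarith : (0:ℝ) ≤ 1 + t) N,
          mul_nonneg (pow_nonneg (by norm_num : (0:ℝ) ≤ 2) N)
            (pow_nonneg (by linarith : (0:ℝ) ≤ 1 + t) N)]

/-- For ð₀ > 0 and N ∈ ℕ, there is a single measurable dominating function g, integrable and
square-integrable for the measure r dr on (0,∞), with `|ψ_ð^j(x)| ≤ g(x)` for all x > 0,
all j ∈ {0,…,N} and all ð ∈ [ð₀/2, 3ð₀/2]. -/
theorem stmt15 (dh₀ : ℝ) (hdh₀ : 0 < dh₀) (N : ℕ) :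
    ∃ g : ℝ → ℝ, Measurable g ∧ (∀ x, 0 < x → 0 ≤ g x) ∧
      MeasureTheory.IntegrableOn (fun r => g r * r) (Set.Ioi 0) ∧
      MeasureTheory.IntegrableOn (fun r => g r ^ 2 * r) (Set.Ioi 0) ∧
      ∀ x > (0 : ℝ), ∀ j ≤ N, ∀ dh ∈ Set.Icc (dh₀ / 2) (3 * dh₀ / 2),
        |psiL dh j x| ≤ g x := by
  set C : ℝ := (3 * dh₀ / 2) * (((N : ℝ) + 1) * 2 ^ N) with hC
  set a : ℝ := 3 * Real.pi * dh₀ / 2 with ha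
  set b : ℝ := Real.pi * dh₀ / 4 with hb
  have hpi := Real.pi_pos
  have ha0 : 0 < a := by rw [ha]; positivity
  have hb0 : 0 < b := by rw [hb]; positivity
  have hC0 : 0 < C := by rw [hC]; positivity
  refine ⟨fun x => C * ((1 + a * x ^ 2) ^ N * Real.exp (-b * x ^ 2)), ?_, ?_, ?_, ?_, ?_⟩
  · fun_prop
  · intro x _
    positivity
  · have h : IntegrableOn (fun x : ℝ => C * ((1 + a * x ^ 2) ^ N * Real.exp (-b * x ^ 2) * x))
        (Set.Ioi 0) := (aux_int a hb0 N).const_mul C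
    refine h.congr_fun (fun x _ => ?_) measurableSet_Ioi
    simp only
    ring
  · have h : IntegrableOn (fun x : ℝ =>
        C ^ 2 * ((1 + a * x ^ 2) ^ (2 * N) * Real.exp (-(2 * b) * x ^ 2) * x))
        (Set.Ioi 0) := (aux_int a (by linarith : (0:ℝ) < 2 * b) (2 * N)).const_mul (C ^ 2)
    refine h.congr_fun (fun x _ => ?_) measurableSet_Ioi
    simp only
    have hexp : Real.exp (-b * x ^ 2) ^ 2 = Real.exp (-(2 * b) * x ^ 2) := by
      rw [← Real.exp_nat_mul]
      congr 1
      push_cast; ring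
    rw [← hexp, mul_comm 2 N, pow_mul]
    ring
  · intro x hx j hj dh hdh
    obtain ⟨hdh1, hdh2⟩ := hdh
    have hdhpos : 0 < dh := by linarith
    have ht : 0 ≤ Real.pi * dh * x ^ 2 := by positivity
    rw [psiL, abs_mul, abs_mul, abs_of_pos hdhpos, abs_of_pos (Real.exp_pos _)]
    have hL := lag_bound hj ht
    calc dh * Real.exp (-(Real.pi * dh * x ^ 2) / 2) * |laguerreP j (Real.pi * dh * x ^ 2)|
        ≤ (3 * dh₀ / 2) * Real.exp (-b * x ^ 2) *
            (((N : ℝ) + 1) * 2 ^ N * (1 + a * x ^ 2) ^ N) := by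
          have hexp : Real.exp (-(Real.pi * dh * x ^ 2) / 2) ≤ Real.exp (-b * x ^ 2) := by
            apply Real.exp_le_exp.mpr
            rw [hb]
            nlinarith [sq_nonneg x]
          have hpow : (1 + Real.pi * dh * x ^ 2) ^ N ≤ (1 + a * x ^ 2) ^ N := by
            apply pow_le_pow_left₀ (by positivity)
            rw [ha]; nlinarith [sq_nonneg x]
          calc dh * Real.exp (-(Real.pi * dh * x ^ 2) / 2) * |laguerreP j (Real.pi * dh * x ^ 2)|
              ≤ dh * Real.exp (-(Real.pi * dh * x ^ 2) / 2) *
                  (((N : ℝ) + 1) * 2 ^ N * (1 + Real.pi * dh * x ^ 2) ^ N) := by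
                apply mul_le_mul_of_nonneg_left hL (by positivity)
            _ ≤ (3 * dh₀ / 2) * Real.exp (-b * x ^ 2) *
                  (((N : ℝ) + 1) * 2 ^ N * (1 + a * x ^ 2) ^ N) := by
                apply mul_le_mul
                · exact mul_le_mul hdh2 hexp (Real.exp_pos _).le (by linarith)
                · apply mul_le_mul_of_nonneg_left hpow (by positivity)
                · positivity
                · positivity
      _ = C * ((1 + a * x ^ 2) ^ N * Real.exp (-b * x ^ 2)) := by rw [hC]; ring
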